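/- For every index i, the partial derivative of the direct-ROI loss L with respect to s_i equals -(1/N)·(τr i − q i · τc i); formally, the function t ↦ L(Function.update s i t) has derivative -(1/N)·(τr i − σ(s i)·τc i) at the point s i. -/

import Mathlib

/-- The sigmoid function. -/
noncomputable def sigm (t : ℝ) : ℝ := 1 / (1 + Real.exp (-t))

lemma sigm_eq (t : ℝ) : sigm t = Real.exp t / (1 + Real.exp t) := by
  unfold sigm
  rw [Real.exp_neg]
  have h1 : Real.exp t > 0 := Real.exp_pos t
  have h2 : (1 : ℝ) + Real.exp t ≠ 0 := by positivity
  field_simp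
  ring

lemma one_sub_sigm (t : ℝ) : 1 - sigm t = 1 / (1 + Real.exp t) := by
  rw [sigm_eq]
  have h2 : (1 : ℝ) + Real.exp t ≠ 0 := by positivity
  field_simp
  ring

lemma log_ratio (t : ℝ) : Real.log (sigm t / (1 - sigm t)) = t := by
  rw [one_sub_sigm, sigm_eq]
  have h2 : (1 : ℝ) + Real.exp t ≠ 0 := by positivity
  have : Real.exp t / (1 + Real.exp t) / (1 / (1 + Real.exp t)) = Real.exp t := by
    field_simp
  rw [this, Real.log_exp]

lemma log_one_sub_sigm (t : ℝ) : Real.log (1 - sigm t) = -Real.log (1 + Real.exp t) := by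
  rw [one_sub_sigm]
  have h2 : (0 : ℝ) < 1 + Real.exp t := by positivity
  rw [Real.log_div one_ne_zero (ne_of_gt h2), Real.log_one, zero_sub]

/-- partial derivative of the direct-ROI loss. -/
theorem direct_roi_partial_deriv
    (N : ℕ) (hN : 0 < N) (s τr τc : Fin N → ℝ)
    (L : (Fin N → ℝ) → ℝ)
    (hL : L = fun u : Fin N → ℝ => -(1 / (N : ℝ)) *
      ∑ i, (τr i * Real.log (sigm (u i) / (1 - sigm (u i)))
        + τc i * Real.log (1 - sigm (u i))))
    (i : Fin N) :
    HasDerivAt (fun t : ℝ => L (Function.update s i t))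
      (-(1 / (N : ℝ)) * (τr i - sigm (s i) * τc i)) (s i) := by
  subst hL
  set h : Fin N → ℝ → ℝ := fun j x => τr j * x + τc j * (-Real.log (1 + Real.exp x)) with hh
  have key : ∀ t : ℝ, (∑ j, (τr j * Real.log (sigm (Function.update s i t j) /
        (1 - sigm (Function.update s i t j)))
        + τc j * Real.log (1 - sigm (Function.update s i t j))))
      = h i t + ∑ j ∈ Finset.univ.erase i, h j (s j) := by
    intro t
    rw [← Finset.add_sum_erase _ _ (Finset.mem_univ i)]
    congr 1
    · simp [hh, log_ratio, log_one_sub_sigm]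
    · refine Finset.sum_congr rfl fun j hj => ?_
      rw [Function.update_of_ne (Finset.ne_of_mem_erase hj)]
      simp [hh, log_ratio, log_one_sub_sigm]
  have heq : (fun t : ℝ => -(1 / (N : ℝ)) *
      ∑ j, (τr j * Real.log (sigm (Function.update s i t j) /
        (1 - sigm (Function.update s i t j)))
        + τc j * Real.log (1 - sigm (Function.update s i t j))))
      = fun t => -(1 / (N : ℝ)) * (h i t + ∑ j ∈ Finset.univ.erase i, h j (s j)) := by
    funext t; rw [key t]
  rw [heq]
  set t0 := s i
  have hpos : (0 : ℝ) < 1 + Real.exp t0 := by positivity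
  have hlog : HasDerivAt (fun x : ℝ => Real.log (1 + Real.exp x))
      (Real.exp t0 / (1 + Real.exp t0)) t0 := by
    have := ((Real.hasDerivAt_exp t0).const_add 1).log (ne_of_gt hpos)
    simpa using this
  have hhi : HasDerivAt (fun x => h i x)
      (τr i - τc i * (Real.exp t0 / (1 + Real.exp t0))) t0 := by
    have h1 : HasDerivAt (fun x : ℝ => τr i * x) (τr i) t0 :=
      by simpa using (hasDerivAt_id t0).const_mul (τr i)
    have h2 : HasDerivAt (fun x : ℝ => τc i * (-Real.log (1 + Real.exp x)))
        (τc i * (-(Real.exp t0 / (1 + Real.exp t0)))) t0 := (hlog.neg).const_mul (τc i)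
    have := h1.add h2
    have e : (fun x => h i x) = (fun x : ℝ => τr i * x) + (fun x : ℝ => τc i * (-Real.log (1 + Real.exp x))) := by
      funext x; simp [hh]
    rw [e, sub_eq_add_neg, ← mul_neg]
    exact this
  have hfin := ((hhi.add_const (∑ j ∈ Finset.univ.erase i, h j (s j))).const_mul
    (-(1 / (N : ℝ))))
  refine hfin.congr_deriv ?_
  rw [sigm_eq]
  ring
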